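/- arXiv:2110.09516 — 2 statements merged into one kernel-verified Lean document; each statement's English description precedes it below -/
import Mathlib

section
/- Let $b>0$, $\sigma>0$ with $b\sigma^2<1$, and $m_0,m_1\in\mathbb{R}$. Writing $\rho = b\sigma^2$, for $X\sim\mathcal{N}(m_0,\sigma^2)$ and $Y\sim\mathcal{N}(m_1,\sigma^2)$ independent, $\mathbb{E}\,e^{bXY} = \frac{1}{\sqrt{1-\rho^2}} \exp\left(\frac{b\rho(m_0^2+m_1^2)+2bm_0m_1}{2(1-\rho^2)}\right)$. -/
open Real MeasureTheory

lemma integral_rexp_quadratic {a : ℝ} (ha : a < 0) (c d : ℝ) :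
    ∫ x : ℝ, Real.exp (a * x ^ 2 + c * x + d)
      = Real.sqrt (π / (-a)) * Real.exp (d - c ^ 2 / (4 * a)) := by
  have h := integral_cexp_quadratic (b := (a:ℂ)) (by simpa using ha) (c:ℂ) (d:ℂ)
  have h1 : (∫ x : ℝ, Complex.exp ((a:ℂ) * x ^ 2 + c * x + d))
      = ((∫ x : ℝ, Real.exp (a * x ^ 2 + c * x + d) : ℝ) : ℂ) := by
    have : ∀ x : ℝ, Complex.exp ((a:ℂ) * x ^ 2 + c * x + d)
        = ((Real.exp (a * x ^ 2 + c * x + d) : ℝ) : ℂ) := by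
      intro x; rw [Complex.ofReal_exp]; push_cast; ring_nf
    simp_rw [this]
    exact integral_ofReal
  have h2 : ((π : ℂ) / -(a:ℂ)) ^ (1 / 2 : ℂ) = ((Real.sqrt (π / (-a)) : ℝ) : ℂ) := by
    have hpa : (0:ℝ) < π / -a := div_pos Real.pi_pos (neg_pos.mpr ha)
    rw [Real.sqrt_eq_rpow,
      show ((π:ℂ) / -(a:ℂ)) = ((π / -a : ℝ) : ℂ) by push_cast; ring,
      show (1/2:ℂ) = (((1/2:ℝ)):ℂ) by norm_num,
      ← Complex.ofReal_cpow hpa.le]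
  rw [h1, h2] at h
  have h3 : Complex.exp ((d:ℂ) - (c:ℂ) ^ 2 / (4 * a)) = ((Real.exp (d - c ^ 2 / (4 * a)) : ℝ) : ℂ) := by
    rw [Complex.ofReal_exp]; push_cast; ring_nf
  rw [h3, ← Complex.ofReal_mul] at h
  exact_mod_cast h

theorem exponential_kernel_cross_term_gaussians
    (b σ m₀ m₁ : ℝ) (hb : 0 < b) (hσ : 0 < σ) (hbσ : b * σ ^ 2 < 1) :
    ∫ x : ℝ, ∫ y : ℝ,
        (1 / Real.sqrt (2 * π * σ ^ 2)) * Real.exp (-(x - m₀) ^ 2 / (2 * σ ^ 2)) *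
        ((1 / Real.sqrt (2 * π * σ ^ 2)) * Real.exp (-(y - m₁) ^ 2 / (2 * σ ^ 2))) *
        Real.exp (b * x * y)
      = (1 / Real.sqrt (1 - (b * σ ^ 2) ^ 2)) *
        Real.exp ((b * (b * σ ^ 2) * (m₀ ^ 2 + m₁ ^ 2) + 2 * b * m₀ * m₁) /
          (2 * (1 - (b * σ ^ 2) ^ 2))) := by
  have hs2 : (0:ℝ) < σ ^ 2 := by positivity
  have hσne : σ ≠ 0 := hσ.ne'
  have hρ : (0:ℝ) < b * σ ^ 2 := by positivity
  have h1ρ : (0:ℝ) < 1 - (b * σ ^ 2) ^ 2 := by nlinarith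
  have h1ρne : (1 : ℝ) - (b * σ ^ 2) ^ 2 ≠ 0 := h1ρ.ne'
  have hC : (0:ℝ) < Real.sqrt (2 * π * σ ^ 2) := Real.sqrt_pos.mpr (by positivity)
  have hCne : Real.sqrt (2 * π * σ ^ 2) ≠ 0 := hC.ne'
  have ha₂ : -(1 / (2 * σ ^ 2)) < 0 := neg_lt_zero.mpr (by positivity)
  have ha₁ : -((1 - (b * σ ^ 2) ^ 2) / (2 * σ ^ 2)) < 0 :=
    neg_lt_zero.mpr (div_pos h1ρ (by positivity))
  have hinner : ∀ x : ℝ,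
      (∫ y : ℝ,
        (1 / Real.sqrt (2 * π * σ ^ 2)) * Real.exp (-(x - m₀) ^ 2 / (2 * σ ^ 2)) *
        ((1 / Real.sqrt (2 * π * σ ^ 2)) * Real.exp (-(y - m₁) ^ 2 / (2 * σ ^ 2))) *
        Real.exp (b * x * y))
      = (1 / Real.sqrt (2 * π * σ ^ 2)) * Real.exp (-(x - m₀) ^ 2 / (2 * σ ^ 2)) *
          Real.exp (b * m₁ * x + b ^ 2 * σ ^ 2 / 2 * x ^ 2) := by
    intro x
    have e1 : ∀ y : ℝ,
        (1 / Real.sqrt (2 * π * σ ^ 2)) * Real.exp (-(x - m₀) ^ 2 / (2 * σ ^ 2)) *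
        ((1 / Real.sqrt (2 * π * σ ^ 2)) * Real.exp (-(y - m₁) ^ 2 / (2 * σ ^ 2))) *
        Real.exp (b * x * y)
        = (1 / Real.sqrt (2 * π * σ ^ 2) * Real.exp (-(x - m₀) ^ 2 / (2 * σ ^ 2)) *
            (1 / Real.sqrt (2 * π * σ ^ 2))) *
          Real.exp (-(1 / (2 * σ ^ 2)) * y ^ 2 + (m₁ / σ ^ 2 + b * x) * y +
            (-(m₁ ^ 2 / (2 * σ ^ 2)))) := by
      intro y
      have hexp : Real.exp (-(y - m₁) ^ 2 / (2 * σ ^ 2)) * Real.exp (b * x * y)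
          = Real.exp (-(1 / (2 * σ ^ 2)) * y ^ 2 + (m₁ / σ ^ 2 + b * x) * y +
              (-(m₁ ^ 2 / (2 * σ ^ 2)))) := by
        rw [← Real.exp_add]; congr 1; field_simp; ring
      calc (1 / Real.sqrt (2 * π * σ ^ 2)) * Real.exp (-(x - m₀) ^ 2 / (2 * σ ^ 2)) *
          ((1 / Real.sqrt (2 * π * σ ^ 2)) * Real.exp (-(y - m₁) ^ 2 / (2 * σ ^ 2))) *
          Real.exp (b * x * y)
          = (1 / Real.sqrt (2 * π * σ ^ 2) * Real.exp (-(x - m₀) ^ 2 / (2 * σ ^ 2)) *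
              (1 / Real.sqrt (2 * π * σ ^ 2))) *
            (Real.exp (-(y - m₁) ^ 2 / (2 * σ ^ 2)) * Real.exp (b * x * y)) := by ring
        _ = _ := by rw [hexp]
    simp_rw [e1, integral_const_mul, integral_rexp_quadratic ha₂]
    have hsqrt : Real.sqrt (π / (-(-(1 / (2 * σ ^ 2))))) = Real.sqrt (2 * π * σ ^ 2) := by
      congr 1; field_simp
    have hexp2 : -(m₁ ^ 2 / (2 * σ ^ 2)) - (m₁ / σ ^ 2 + b * x) ^ 2 / (4 * -(1 / (2 * σ ^ 2)))
        = b * m₁ * x + b ^ 2 * σ ^ 2 / 2 * x ^ 2 := by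
      field_simp; ring
    rw [hsqrt, hexp2]
    field_simp
  simp_rw [hinner]
  have e2 : ∀ x : ℝ,
      1 / Real.sqrt (2 * π * σ ^ 2) * Real.exp (-(x - m₀) ^ 2 / (2 * σ ^ 2)) *
        Real.exp (b * m₁ * x + b ^ 2 * σ ^ 2 / 2 * x ^ 2)
      = (1 / Real.sqrt (2 * π * σ ^ 2)) *
          Real.exp (-((1 - (b * σ ^ 2) ^ 2) / (2 * σ ^ 2)) * x ^ 2 +
            (m₀ / σ ^ 2 + b * m₁) * x + (-(m₀ ^ 2 / (2 * σ ^ 2)))) := by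
    intro x
    rw [mul_assoc, ← Real.exp_add]
    congr 2
    field_simp
    ring
  simp_rw [e2, integral_const_mul, integral_rexp_quadratic ha₁]
  have hsqrt : Real.sqrt (π / (-(-((1 - (b * σ ^ 2) ^ 2) / (2 * σ ^ 2)))))
      = Real.sqrt (2 * π * σ ^ 2) / Real.sqrt (1 - (b * σ ^ 2) ^ 2) := by
    rw [show π / (-(-((1 - (b * σ ^ 2) ^ 2) / (2 * σ ^ 2))))
        = (2 * π * σ ^ 2) / (1 - (b * σ ^ 2) ^ 2) by field_simp,
      Real.sqrt_div (by positivity)]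
  have hexp3 : -(m₀ ^ 2 / (2 * σ ^ 2)) -
      (m₀ / σ ^ 2 + b * m₁) ^ 2 / (4 * -((1 - (b * σ ^ 2) ^ 2) / (2 * σ ^ 2)))
      = (b * (b * σ ^ 2) * (m₀ ^ 2 + m₁ ^ 2) + 2 * b * m₀ * m₁) /
          (2 * (1 - (b * σ ^ 2) ^ 2)) := by
    rw [show (4:ℝ) * -((1 - (b * σ ^ 2) ^ 2) / (2 * σ ^ 2))
        = ((b * σ ^ 2) ^ 2 - 1) * (2 / σ ^ 2) by field_simp; ring]
    have h2 : ((b * σ ^ 2) ^ 2 - 1 : ℝ) ≠ 0 := by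
      intro h; apply h1ρne; linarith
    rw [← neg_div, div_sub_div _ _ (by positivity) (mul_ne_zero h2 (by positivity)),
      div_eq_div_iff (mul_ne_zero (by positivity) (mul_ne_zero h2 (by positivity))) (mul_ne_zero two_ne_zero h1ρne)]
    field_simp
    ring
  rw [hsqrt, hexp3]
  have hC1 : (0:ℝ) < Real.sqrt (1 - (b * σ ^ 2) ^ 2) := Real.sqrt_pos.mpr h1ρ
  field_simp
end

section
/- Let $b>0$, $\sigma>0$ with $\rho:=b\sigma^2<1$, and $m_0,m_1\in\mathbb{R}$. Setting $P=\mathcal{N}(m_0,\sigma^2)$, $Q=\mathcal{N}(m_1,\sigma^2)$, and $k(x,y)=e^{bxy}$, the squared MMD, defined as $\mathbb{E}_{x,x'\sim P}k(x,x') + \mathbb{E}_{y,y'\sim Q}k(y,y') - 2\mathbb{E}_{x\sim P, y\sim Q}k(x,y)$ (with all pairs independent), equals $\frac{1}{\sqrt{1-\rho^2}}\left[e^{bm_0^2/(1-\rho)} + e^{bm_1^2/(1-\rho)} - 2\exp\left(\frac{b\rho(m_0^2+m_1^2)+2bm_0m_1}{2(1-\rho^2)}\right)\right]$. -/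
open Real MeasureTheory

lemma gauss_quad (p q : ℝ) (hp : 0 < p) :
    ∫ x : ℝ, Real.exp (-p * x ^ 2 + q * x)
      = Real.sqrt (π / p) * Real.exp (q ^ 2 / (4 * p)) := by
  have hkey : ∀ x : ℝ, Real.exp (-p * x ^ 2 + q * x)
      = Real.exp (-p * (x - q / (2 * p)) ^ 2) * Real.exp (q ^ 2 / (4 * p)) := by
    intro x
    rw [← Real.exp_add]
    congr 1
    field_simp
    ring
  calc ∫ x : ℝ, Real.exp (-p * x ^ 2 + q * x)
      = ∫ x : ℝ, Real.exp (-p * (x - q / (2 * p)) ^ 2) * Real.exp (q ^ 2 / (4 * p)) :=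
        integral_congr_ae (Filter.Eventually.of_forall hkey)
    _ = (∫ x : ℝ, Real.exp (-p * (x - q / (2 * p)) ^ 2)) * Real.exp (q ^ 2 / (4 * p)) := by
        rw [integral_mul_const]
    _ = Real.sqrt (π / p) * Real.exp (q ^ 2 / (4 * p)) := by
        rw [integral_sub_right_eq_self (fun x => Real.exp (-p * x ^ 2)) (q / (2 * p)),
          integral_gaussian]

lemma inner_int (σ m c : ℝ) (hσ : 0 < σ) :
    ∫ y : ℝ, (1 / Real.sqrt (2 * π * σ ^ 2)) * Real.exp (-(y - m) ^ 2 / (2 * σ ^ 2)) *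
        Real.exp (c * y)
      = Real.exp (c * m + c ^ 2 * σ ^ 2 / 2) := by
  have hσ2 : (σ : ℝ) ^ 2 ≠ 0 := by positivity
  have hp : 0 < 1 / (2 * σ ^ 2) := by positivity
  have hS : (0:ℝ) < 2 * π * σ ^ 2 := by positivity
  have hSne : Real.sqrt (2 * π * σ ^ 2) ≠ 0 := Real.sqrt_ne_zero'.mpr hS
  have hcalc : ∀ y : ℝ,
      (1 / Real.sqrt (2 * π * σ ^ 2)) * Real.exp (-(y - m) ^ 2 / (2 * σ ^ 2)) *
        Real.exp (c * y)
      = (1 / Real.sqrt (2 * π * σ ^ 2)) * Real.exp (-(m ^ 2) / (2 * σ ^ 2)) *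
        Real.exp (-(1 / (2 * σ ^ 2)) * y ^ 2 + (m / σ ^ 2 + c) * y) := by
    intro y
    simp only [mul_assoc, ← Real.exp_add]
    congr 1
    field_simp
    ring
  rw [integral_congr_ae (Filter.Eventually.of_forall hcalc), integral_const_mul,
    gauss_quad _ _ hp]
  have h1 : π / (1 / (2 * σ ^ 2)) = 2 * π * σ ^ 2 := by field_simp
  rw [h1]
  have hE : Real.exp (-(m ^ 2) / (2 * σ ^ 2)) *
      Real.exp ((m / σ ^ 2 + c) ^ 2 / (4 * (1 / (2 * σ ^ 2))))
      = Real.exp (c * m + c ^ 2 * σ ^ 2 / 2) := by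
    rw [← Real.exp_add]
    congr 1
    field_simp
    ring
  rw [← hE]
  field_simp

lemma double_int (b σ m m' : ℝ) (hb : 0 < b) (hσ : 0 < σ) (hbσ : b * σ ^ 2 < 1) :
    (∫ x : ℝ, ∫ y : ℝ,
        (1 / Real.sqrt (2 * π * σ ^ 2)) * Real.exp (-(x - m) ^ 2 / (2 * σ ^ 2)) *
        ((1 / Real.sqrt (2 * π * σ ^ 2)) * Real.exp (-(y - m') ^ 2 / (2 * σ ^ 2))) *
        Real.exp (b * x * y))
      = (1 / Real.sqrt (1 - (b * σ ^ 2) ^ 2)) *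
          Real.exp ((b * (b * σ ^ 2) * (m ^ 2 + m' ^ 2) + 2 * b * m * m') /
            (2 * (1 - (b * σ ^ 2) ^ 2))) := by
  have hσ2 : (σ : ℝ) ^ 2 ≠ 0 := by positivity
  have hρ : 0 < b * σ ^ 2 := by positivity
  have hρ2 : (0:ℝ) < 1 - (b * σ ^ 2) ^ 2 := by nlinarith
  have hρ2' : (1:ℝ) - (b * σ ^ 2) ^ 2 ≠ 0 := ne_of_gt hρ2
  have hS : (0:ℝ) < 2 * π * σ ^ 2 := by positivity
  have hSne : Real.sqrt (2 * π * σ ^ 2) ≠ 0 := Real.sqrt_ne_zero'.mpr hS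
  -- inner integral
  have hinner : ∀ x : ℝ,
      (∫ y : ℝ,
        (1 / Real.sqrt (2 * π * σ ^ 2)) * Real.exp (-(x - m) ^ 2 / (2 * σ ^ 2)) *
        ((1 / Real.sqrt (2 * π * σ ^ 2)) * Real.exp (-(y - m') ^ 2 / (2 * σ ^ 2))) *
        Real.exp (b * x * y))
      = (1 / Real.sqrt (2 * π * σ ^ 2)) * Real.exp (-(x - m) ^ 2 / (2 * σ ^ 2)) *
        Real.exp ((b * x) * m' + (b * x) ^ 2 * σ ^ 2 / 2) := by
    intro x
    have step : ∀ y : ℝ,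
        (1 / Real.sqrt (2 * π * σ ^ 2)) * Real.exp (-(x - m) ^ 2 / (2 * σ ^ 2)) *
        ((1 / Real.sqrt (2 * π * σ ^ 2)) * Real.exp (-(y - m') ^ 2 / (2 * σ ^ 2))) *
        Real.exp (b * x * y)
        = ((1 / Real.sqrt (2 * π * σ ^ 2)) * Real.exp (-(x - m) ^ 2 / (2 * σ ^ 2))) *
        ((1 / Real.sqrt (2 * π * σ ^ 2)) * Real.exp (-(y - m') ^ 2 / (2 * σ ^ 2)) *
          Real.exp ((b * x) * y)) := by
      intro y; ring
    rw [integral_congr_ae (Filter.Eventually.of_forall step), integral_const_mul,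
      inner_int σ m' (b * x) hσ]
  rw [integral_congr_ae (Filter.Eventually.of_forall hinner)]
  -- outer integral
  have hcalc : ∀ x : ℝ,
      (1 / Real.sqrt (2 * π * σ ^ 2)) * Real.exp (-(x - m) ^ 2 / (2 * σ ^ 2)) *
        Real.exp ((b * x) * m' + (b * x) ^ 2 * σ ^ 2 / 2)
      = (1 / Real.sqrt (2 * π * σ ^ 2)) * Real.exp (-(m ^ 2) / (2 * σ ^ 2)) *
        Real.exp (-((1 - (b * σ ^ 2) ^ 2) / (2 * σ ^ 2)) * x ^ 2 +
          (m / σ ^ 2 + b * m') * x) := by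
    intro x
    simp only [mul_assoc, ← Real.exp_add]
    congr 1
    field_simp
    ring
  rw [integral_congr_ae (Filter.Eventually.of_forall hcalc), integral_const_mul,
    gauss_quad _ _ (by positivity)]
  have h1 : π / ((1 - (b * σ ^ 2) ^ 2) / (2 * σ ^ 2))
      = (2 * π * σ ^ 2) / (1 - (b * σ ^ 2) ^ 2) := by field_simp
  rw [h1, Real.sqrt_div hS.le]
  have hRne : Real.sqrt (1 - (b * σ ^ 2) ^ 2) ≠ 0 := Real.sqrt_ne_zero'.mpr hρ2
  have hE : Real.exp (-(m ^ 2) / (2 * σ ^ 2)) *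
      Real.exp ((m / σ ^ 2 + b * m') ^ 2 / (4 * ((1 - (b * σ ^ 2) ^ 2) / (2 * σ ^ 2))))
      = Real.exp ((b * (b * σ ^ 2) * (m ^ 2 + m' ^ 2) + 2 * b * m * m') /
          (2 * (1 - (b * σ ^ 2) ^ 2))) := by
    rw [← Real.exp_add]
    congr 1
    have hσ0 : σ ≠ 0 := hσ.ne'
    have hρ4 : (1:ℝ) - σ ^ 4 * b ^ 2 ≠ 0 := by rw [show σ ^ 4 * b ^ 2 = (b * σ ^ 2) ^ 2 by ring]; exact hρ2'
    field_simp
    ring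
  rw [← hE]
  field_simp

/-- Explicit squared MMD between two Gaussians of equal variance under the
exponential kernel `k(x,y) = exp (b*x*y)`. Densities are written explicitly and
expectations as integrals against those densities. -/
theorem explicit_mmd_gaussians_exponential_kernel
    (b σ m₀ m₁ : ℝ) (hb : 0 < b) (hσ : 0 < σ) (hbσ : b * σ ^ 2 < 1) :
    (∫ x : ℝ, ∫ x' : ℝ,
        (1 / Real.sqrt (2 * π * σ ^ 2)) * Real.exp (-(x - m₀) ^ 2 / (2 * σ ^ 2)) *
        ((1 / Real.sqrt (2 * π * σ ^ 2)) * Real.exp (-(x' - m₀) ^ 2 / (2 * σ ^ 2))) *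
        Real.exp (b * x * x')) +
    (∫ y : ℝ, ∫ y' : ℝ,
        (1 / Real.sqrt (2 * π * σ ^ 2)) * Real.exp (-(y - m₁) ^ 2 / (2 * σ ^ 2)) *
        ((1 / Real.sqrt (2 * π * σ ^ 2)) * Real.exp (-(y' - m₁) ^ 2 / (2 * σ ^ 2))) *
        Real.exp (b * y * y')) -
    2 * (∫ x : ℝ, ∫ y : ℝ,
        (1 / Real.sqrt (2 * π * σ ^ 2)) * Real.exp (-(x - m₀) ^ 2 / (2 * σ ^ 2)) *
        ((1 / Real.sqrt (2 * π * σ ^ 2)) * Real.exp (-(y - m₁) ^ 2 / (2 * σ ^ 2))) *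
        Real.exp (b * x * y))
      = (1 / Real.sqrt (1 - (b * σ ^ 2) ^ 2)) *
          (Real.exp (b * m₀ ^ 2 / (1 - b * σ ^ 2)) +
           Real.exp (b * m₁ ^ 2 / (1 - b * σ ^ 2)) -
           2 * Real.exp ((b * (b * σ ^ 2) * (m₀ ^ 2 + m₁ ^ 2) + 2 * b * m₀ * m₁) /
             (2 * (1 - (b * σ ^ 2) ^ 2)))) := by
  have hρ : 0 < b * σ ^ 2 := by positivity
  have h1 : (1:ℝ) - b * σ ^ 2 ≠ 0 := by nlinarith
  have h2 : (1:ℝ) + b * σ ^ 2 ≠ 0 := by nlinarith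
  rw [double_int b σ m₀ m₀ hb hσ hbσ, double_int b σ m₁ m₁ hb hσ hbσ,
    double_int b σ m₀ m₁ hb hσ hbσ]
  have e0 : (b * (b * σ ^ 2) * (m₀ ^ 2 + m₀ ^ 2) + 2 * b * m₀ * m₀) /
      (2 * (1 - (b * σ ^ 2) ^ 2)) = b * m₀ ^ 2 / (1 - b * σ ^ 2) := by
    rw [show (1:ℝ) - (b * σ ^ 2) ^ 2 = (1 - b * σ ^ 2) * (1 + b * σ ^ 2) by ring]
    field_simp
    ring
  have e1 : (b * (b * σ ^ 2) * (m₁ ^ 2 + m₁ ^ 2) + 2 * b * m₁ * m₁) /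
      (2 * (1 - (b * σ ^ 2) ^ 2)) = b * m₁ ^ 2 / (1 - b * σ ^ 2) := by
    rw [show (1:ℝ) - (b * σ ^ 2) ^ 2 = (1 - b * σ ^ 2) * (1 + b * σ ^ 2) by ring]
    field_simp
    ring
  rw [e0, e1]
  ring
end
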